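/- The identity map from ([0, 2^10), D) to ([0, 2^10), Δ), where D is the digit-based metric and Δ is the Euclidean distance, is continuous. Equivalently, if D(x^n, x) → 0 then |x^n - x| → 0. -/

import Mathlib

open Finset

/-- k-th binary digit (from the left, with 10 bits) of the integral part of x. -/
noncomputable def ebit (x : ℝ) (k : ℕ) : ℕ := (Int.toNat ⌊x⌋) / 2 ^ (9 - k) % 2

/-- k-th decimal digit of the fractional part of x (floor-based expansion,
which never ends in an infinite tail of 9's). -/
noncomputable def sdig (x : ℝ) (k : ℕ) : ℕ := Int.toNat ⌊Int.fract x * 10 ^ (k + 1)⌋ % 10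

/-- Hamming distance between the binary digits of the integral parts. -/
noncomputable def De (x y : ℝ) : ℝ :=
  ∑ k ∈ Finset.range 10, (if ebit x k = ebit y k then (0 : ℝ) else 1)

/-- Weighted distance between the decimal digit sequences of the fractional parts. -/
noncomputable def Ds (x y : ℝ) : ℝ :=
  ∑' k : ℕ, |(sdig x k : ℝ) - (sdig y k : ℝ)| / 10 ^ (k + 1)

/-- The digit-based distance D. -/
noncomputable def Dd (x y : ℝ) : ℝ := De x y + Ds x y

lemma floor_ten_mul_div (a : ℝ) : ⌊10 * a⌋ / 10 = ⌊a⌋ := by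
  have h1 : 10 * ⌊a⌋ ≤ ⌊10 * a⌋ := by
    rw [Int.le_floor]; push_cast
    nlinarith [Int.floor_le a]
  have h2 : ⌊10 * a⌋ < 10 * ⌊a⌋ + 10 := by
    rw [Int.floor_lt]; push_cast
    nlinarith [Int.lt_floor_add_one a]
  omega

lemma sdig_cast (x : ℝ) (k : ℕ) :
    (sdig x k : ℝ) = (⌊Int.fract x * 10 ^ (k + 1)⌋ : ℝ) - 10 * (⌊Int.fract x * 10 ^ k⌋ : ℝ) := by
  have hnn : (0 : ℤ) ≤ ⌊Int.fract x * 10 ^ (k + 1)⌋ := by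
    exact Int.floor_nonneg.2 (mul_nonneg (Int.fract_nonneg x) (by positivity))
  have hdiv : ⌊Int.fract x * 10 ^ (k + 1)⌋ / 10 = ⌊Int.fract x * 10 ^ k⌋ := by
    have : Int.fract x * 10 ^ (k + 1) = 10 * (Int.fract x * 10 ^ k) := by ring
    rw [this, floor_ten_mul_div]
  have hz : (sdig x k : ℤ) = ⌊Int.fract x * 10 ^ (k + 1)⌋ -
      10 * ⌊Int.fract x * 10 ^ k⌋ := by
    unfold sdig
    push_cast
    rw [Int.toNat_of_nonneg hnn, ← hdiv]
    omega
  exact_mod_cast congrArg (fun z : ℤ => (z : ℝ)) hz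

lemma sdig_lt (x : ℝ) (k : ℕ) : sdig x k < 10 := Nat.mod_lt _ (by norm_num)

lemma summable_aux (x y : ℝ) :
    Summable (fun k : ℕ => |(sdig x k : ℝ) - (sdig y k : ℝ)| / 10 ^ (k + 1)) := by
  refine Summable.of_nonneg_of_le (fun k => by positivity) (fun k => ?_)
    ((summable_geometric_of_lt_one (r := (1/10 : ℝ)) (by norm_num) (by norm_num)).mul_left 10)
  · 
    have hx : (sdig x k : ℝ) < 10 := by exact_mod_cast sdig_lt x k
    have hy : (sdig y k : ℝ) < 10 := by exact_mod_cast sdig_lt y k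
    have hx0 : (0 : ℝ) ≤ (sdig x k : ℝ) := by positivity
    have hy0 : (0 : ℝ) ≤ (sdig y k : ℝ) := by positivity
    have habs : |(sdig x k : ℝ) - (sdig y k : ℝ)| ≤ 10 := by
      rw [abs_le]; constructor <;> linarith
    have hpow : (0 : ℝ) < 10 ^ (k + 1) := by positivity
    rw [div_le_iff₀ hpow]
    have hval : 10 * (1 / 10 : ℝ) ^ k * 10 ^ (k + 1) = 100 := by
      rw [one_div, inv_pow, pow_succ]
      field_simp
      ring
    calc |(sdig x k : ℝ) - (sdig y k : ℝ)| ≤ 10 := habs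
      _ ≤ 10 * (1 / 10 : ℝ) ^ k * 10 ^ (k + 1) := by rw [hval]; norm_num

lemma partial_sum (x : ℝ) (n : ℕ) :
    ∑ k ∈ Finset.range n, (sdig x k : ℝ) / 10 ^ (k + 1)
      = (⌊Int.fract x * 10 ^ n⌋ : ℝ) / 10 ^ n := by
  have h : ∀ k, (sdig x k : ℝ) / 10 ^ (k + 1)
      = (⌊Int.fract x * 10 ^ (k+1)⌋ : ℝ) / 10 ^ (k+1)
        - (⌊Int.fract x * 10 ^ k⌋ : ℝ) / 10 ^ k := by
    intro k
    rw [sdig_cast]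
    field_simp
    ring
  calc ∑ k ∈ Finset.range n, (sdig x k : ℝ) / 10 ^ (k + 1)
      = ∑ k ∈ Finset.range n, ((⌊Int.fract x * 10 ^ (k+1)⌋ : ℝ) / 10 ^ (k+1)
          - (⌊Int.fract x * 10 ^ k⌋ : ℝ) / 10 ^ k) := by
        exact Finset.sum_congr rfl fun k _ => h k
    _ = (⌊Int.fract x * 10 ^ n⌋ : ℝ) / 10 ^ n - (⌊Int.fract x * 10 ^ 0⌋ : ℝ) / 10 ^ 0 :=
        Finset.sum_range_sub (fun k => (⌊Int.fract x * 10 ^ k⌋ : ℝ) / 10 ^ k) n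
    _ = (⌊Int.fract x * 10 ^ n⌋ : ℝ) / 10 ^ n := by
        have : ⌊Int.fract x * 10 ^ 0⌋ = 0 := by
          simp [Int.floor_eq_zero_iff, Set.mem_Ico, Int.fract_nonneg, Int.fract_lt_one]
        simp [this]

lemma partial_close (x : ℝ) (n : ℕ) :
    |Int.fract x - (⌊Int.fract x * 10 ^ n⌋ : ℝ) / 10 ^ n| ≤ 1 / 10 ^ n := by
  have hpow : (0 : ℝ) < 10 ^ n := by positivity
  have h1 : (⌊Int.fract x * 10 ^ n⌋ : ℝ) ≤ Int.fract x * 10 ^ n := Int.floor_le _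
  have h2 : Int.fract x * 10 ^ n < (⌊Int.fract x * 10 ^ n⌋ : ℝ) + 1 := Int.lt_floor_add_one _
  rw [abs_le]
  have e1 : (⌊Int.fract x * 10 ^ n⌋ : ℝ) / 10 ^ n ≤ Int.fract x := by
    rw [div_le_iff₀ hpow]; exact h1
  have e2 : Int.fract x ≤ ((1 : ℝ) + ⌊Int.fract x * 10 ^ n⌋) / 10 ^ n := by
    rw [le_div_iff₀ hpow]; linarith
  have heq : ((1 : ℝ) + ⌊Int.fract x * 10 ^ n⌋) / 10 ^ n
      = 1 / 10 ^ n + (⌊Int.fract x * 10 ^ n⌋ : ℝ) / 10 ^ n := by ring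
  have hpos : (0 : ℝ) < 1 / 10 ^ n := by positivity
  constructor <;> [linarith; linarith [heq ▸ e2]]

lemma fract_dist_le (x y : ℝ) : |Int.fract y - Int.fract x| ≤ Ds y x := by
  have key : ∀ n : ℕ, |Int.fract y - Int.fract x| ≤ Ds y x + 2 * (1 / 10 : ℝ) ^ n := by
    intro n
    have hsum := summable_aux y x
    have hpart : ∑ k ∈ Finset.range n, |(sdig y k : ℝ) - (sdig x k : ℝ)| / 10 ^ (k + 1)
        ≤ Ds y x := Summable.sum_le_tsum _ (fun k _ => by positivity) hsum
    have hdiff : |∑ k ∈ Finset.range n, (sdig y k : ℝ) / 10 ^ (k + 1)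
        - ∑ k ∈ Finset.range n, (sdig x k : ℝ) / 10 ^ (k + 1)|
        ≤ ∑ k ∈ Finset.range n, |(sdig y k : ℝ) - (sdig x k : ℝ)| / 10 ^ (k + 1) := by
      rw [← Finset.sum_sub_distrib]
      refine (Finset.abs_sum_le_sum_abs _ _).trans ?_
      apply Finset.sum_le_sum
      intro k _
      rw [div_sub_div_same, abs_div, abs_of_pos (show (0:ℝ) < 10 ^ (k+1) by positivity)]
    have hy := partial_close y n
    have hx := partial_close x n
    have hpy := partial_sum y n
    have hpx := partial_sum x n
    rw [hpy, hpx] at hdiff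
    have hgeom : (1 / 10 : ℝ) ^ n = 1 / 10 ^ n := by rw [one_div, inv_pow, one_div]
    calc |Int.fract y - Int.fract x|
        ≤ |Int.fract y - (⌊Int.fract y * 10 ^ n⌋ : ℝ) / 10 ^ n|
          + |(⌊Int.fract y * 10 ^ n⌋ : ℝ) / 10 ^ n - (⌊Int.fract x * 10 ^ n⌋ : ℝ) / 10 ^ n|
          + |(⌊Int.fract x * 10 ^ n⌋ : ℝ) / 10 ^ n - Int.fract x| := by
            have := abs_sub_abs_le_abs_sub (Int.fract y) (Int.fract x)
            calc |Int.fract y - Int.fract x| = |(Int.fract y - (⌊Int.fract y * 10 ^ n⌋ : ℝ) / 10 ^ n)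
                + ((⌊Int.fract y * 10 ^ n⌋ : ℝ) / 10 ^ n - (⌊Int.fract x * 10 ^ n⌋ : ℝ) / 10 ^ n)
                + ((⌊Int.fract x * 10 ^ n⌋ : ℝ) / 10 ^ n - Int.fract x)| := by ring_nf
              _ ≤ _ := by
                  refine (abs_add_le _ _).trans ?_
                  gcongr
                  exact abs_add_le _ _
      _ ≤ 1 / 10 ^ n + Ds y x + 1 / 10 ^ n := by
          have h3 : |(⌊Int.fract x * 10 ^ n⌋ : ℝ) / 10 ^ n - Int.fract x| ≤ 1 / 10 ^ n := by
            rw [abs_sub_comm]; exact hx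
          gcongr
          exact hdiff.trans hpart
      _ = Ds y x + 2 * (1 / 10 : ℝ) ^ n := by rw [hgeom]; ring
  have htend : Filter.Tendsto (fun n : ℕ => Ds y x + 2 * (1 / 10 : ℝ) ^ n)
      Filter.atTop (nhds (Ds y x + 2 * 0)) := by
    exact Filter.Tendsto.add tendsto_const_nhds
      ((tendsto_pow_atTop_nhds_zero_of_lt_one (by norm_num) (by norm_num)).const_mul 2)
  rw [mul_zero, add_zero] at htend
  exact ge_of_tendsto' htend key

lemma De_nonneg (x y : ℝ) : 0 ≤ De x y := by
  apply Finset.sum_nonneg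
  intro k _
  split <;> norm_num

lemma Ds_nonneg (x y : ℝ) : 0 ≤ Ds x y :=
  tsum_nonneg fun k => by positivity

lemma floor_eq_of_De_lt_one {x y : ℝ} (hx0 : 0 ≤ x) (hx1 : x < 2 ^ 10)
    (hy0 : 0 ≤ y) (hy1 : y < 2 ^ 10) (h : De y x < 1) : ⌊y⌋ = ⌊x⌋ := by
  have hbits : ∀ k ∈ Finset.range 10, ebit y k = ebit x k := by
    intro k hk
    by_contra hne
    have hterm : (1 : ℝ) ≤ ∑ j ∈ Finset.range 10,
        (if ebit y j = ebit x j then (0 : ℝ) else 1) := by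
      have := Finset.single_le_sum
        (f := fun j => if ebit y j = ebit x j then (0 : ℝ) else 1)
        (fun j _ => by by_cases h : ebit y j = ebit x j <;> simp [h]) hk
      simpa [hne] using this
    unfold De at h; linarith
  have hxf : (0 : ℤ) ≤ ⌊x⌋ := Int.floor_nonneg.2 hx0
  have hyf : (0 : ℤ) ≤ ⌊y⌋ := Int.floor_nonneg.2 hy0
  have hxlt : ⌊x⌋ < 2 ^ 10 := by
    rw [Int.floor_lt]; exact_mod_cast hx1
  have hylt : ⌊y⌋ < 2 ^ 10 := by
    rw [Int.floor_lt]; exact_mod_cast hy1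
  have hn : (⌊y⌋).toNat = (⌊x⌋).toNat := by
    apply Nat.eq_of_testBit_eq
    intro i
    rcases lt_or_ge i 10 with hi | hi
    · have h9 : 9 - (9 - i) = i := by omega
      have := hbits (9 - i) (Finset.mem_range.2 (by omega))
      unfold ebit at this
      rw [h9] at this
      simp only [Nat.testBit_eq_decide_div_mod_eq, Nat.shiftRight_eq_div_pow, this]
    · have hx2 : (⌊x⌋).toNat < 2 ^ i := by
        calc (⌊x⌋).toNat < 2 ^ 10 := by omega
          _ ≤ 2 ^ i := Nat.pow_le_pow_right (by norm_num) hi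
      have hy2 : (⌊y⌋).toNat < 2 ^ i := by
        calc (⌊y⌋).toNat < 2 ^ 10 := by omega
          _ ≤ 2 ^ i := Nat.pow_le_pow_right (by norm_num) hi
      rw [Nat.testBit_lt_two_pow hx2, Nat.testBit_lt_two_pow hy2]
  omega


/-- The identity map from ([0, 2^10), D) to ([0, 2^10), Δ) is continuous. -/
theorem stmt2 :
    ∀ x ∈ Set.Ico (0 : ℝ) (2 ^ 10), ∀ ε > (0 : ℝ), ∃ δ > (0 : ℝ),
      ∀ y ∈ Set.Ico (0 : ℝ) (2 ^ 10), Dd y x < δ → |y - x| < ε := by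
  intro x hx ε hε
  refine ⟨min 1 ε, lt_min one_pos hε, ?_⟩
  intro y hy hD
  have hDe : De y x < 1 := by
    have := Ds_nonneg y x
    have h1 : Dd y x < 1 := lt_of_lt_of_le hD (min_le_left _ _)
    unfold Dd at h1; linarith
  have hfloor : ⌊y⌋ = ⌊x⌋ :=
    floor_eq_of_De_lt_one hx.1 hx.2 hy.1 hy.2 hDe
  have hsub : y - x = Int.fract y - Int.fract x := by
    rw [Int.fract, Int.fract, hfloor]; ring
  rw [hsub]
  have h1 : |Int.fract y - Int.fract x| ≤ Ds y x := fract_dist_le x y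
  have h2 : Ds y x < ε := by
    have := De_nonneg y x
    have h3 : Dd y x < ε := lt_of_lt_of_le hD (min_le_right _ _)
    unfold Dd at h3; linarith
  linarith
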